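/- arXiv:math/0009225 — 6 statements merged into one kernel-verified Lean document; each statement's English description precedes it below -/
import Mathlib

section
/- Let A, B, C, D : ℝ → ℝ³ be curves, each differentiable at t₀, such that the tetrahedron with vertices A(t₀), B(t₀), C(t₀), D(t₀) is nondegenerate, and such that the five distances dist(A(t),B(t)), dist(A(t),C(t)), dist(A(t),D(t)), dist(B(t),C(t)), dist(B(t),D(t)) are constant in t (only l_CD(t) := dist(C(t),D(t)) may vary). Let φ(t) denote the dihedral angle of the tetrahedron A(t)B(t)C(t)D(t) at the edge A(t)B(t). Then |φ'(t₀)| = (1/6)·l_AB·l_CD/V·|l_CD'(t₀)|, where l_AB = dist(A(t₀),B(t₀)), l_CD = dist(C(t₀),D(t₀)) and V is the volume of the tetrahedron at t₀. -/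
local notation "⟪" x ", " y "⟫" => @inner ℝ _ _ x y

section aux
variable {E : Type*} [NormedAddCommGroup E] [InnerProductSpace ℝ E]

lemma perp_inner' (b c d : E) (hb : b ≠ 0) :
    ⟪c - (⟪c, ‖b‖⁻¹ • b⟫ : ℝ) • (‖b‖⁻¹ • b), d - (⟪d, ‖b‖⁻¹ • b⟫ : ℝ) • (‖b‖⁻¹ • b)⟫
      = ⟪c,d⟫ - ⟪b,c⟫ * ⟪b,d⟫ / ⟪b,b⟫ := by
  have hn : ‖b‖ ≠ 0 := norm_ne_zero_iff.mpr hb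
  simp only [inner_sub_left, inner_sub_right, real_inner_smul_left, real_inner_smul_right,
    real_inner_comm c b, real_inner_comm d b, real_inner_self_eq_norm_sq]
  field_simp
  ring

lemma perp_normsq' (b c : E) (hb : b ≠ 0) :
    ‖c - (⟪c, ‖b‖⁻¹ • b⟫ : ℝ) • (‖b‖⁻¹ • b)‖ ^ 2 = ⟪c,c⟫ - ⟪b,c⟫ ^ 2 / ⟪b,b⟫ := by
  rw [← real_inner_self_eq_norm_sq, perp_inner' b c c hb]
  ring
end aux

lemma gram_sq (b c d : EuclideanSpace ℝ (Fin 3)) :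
    ((Matrix.of fun i j : Fin 3 => (![b, c, d] j) i).det) ^ 2 =
      ⟪b,b⟫ * (⟪c,c⟫ * ⟪d,d⟫ - ⟪c,d⟫ ^ 2)
        - ⟪b,c⟫ * (⟪b,c⟫ * ⟪d,d⟫ - ⟪c,d⟫ * ⟪b,d⟫)
        + ⟪b,d⟫ * (⟪b,c⟫ * ⟪c,d⟫ - ⟪c,c⟫ * ⟪b,d⟫) := by
  simp [Matrix.det_fin_three, PiLp.inner_apply, Fin.sum_univ_three, EuclideanSpace.norm_sq_eq]
  ring

lemma det_mid_eq (b c : EuclideanSpace ℝ (Fin 3)) :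
    (Matrix.of fun i j : Fin 3 => (![b, c, c] j) i).det = 0 := by
  simp [Matrix.det_fin_three]

lemma det_fst_zero (c d : EuclideanSpace ℝ (Fin 3)) :
    (Matrix.of fun i j : Fin 3 => (![(0 : EuclideanSpace ℝ (Fin 3)), c, d] j) i).det = 0 := by
  simp [Matrix.det_fin_three]



/-- The dihedral angle at the edge `PQ`, seen from points `X` and `Y`: the angle (valued in
`[0, π]`) between the components of `X - P` and `Y - P` orthogonal to `Q - P`. -/
noncomputable def dihedralAngle (P Q X Y : EuclideanSpace ℝ (Fin 3)) : ℝ :=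
  let u : EuclideanSpace ℝ (Fin 3) := ‖Q - P‖⁻¹ • (Q - P)
  InnerProductGeometry.angle
    (X - P - (inner ℝ (X - P) u : ℝ) • u)
    (Y - P - (inner ℝ (Y - P) u : ℝ) • u)

/-- The (unsigned) volume of the tetrahedron with vertices `A B C D`:
`|det(B - A, C - A, D - A)| / 6`. -/
noncomputable def tetVol (A B C D : EuclideanSpace ℝ (Fin 3)) : ℝ :=
  |(Matrix.of fun i j : Fin 3 => (![B - A, C - A, D - A] j) i).det| / 6

set_option maxHeartbeats 1000000 in
/-- If all edge lengths of a differentiably moving tetrahedron `A(t)B(t)C(t)D(t)` are fixed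
except `l_CD`, then the dihedral angle `φ` at the edge `AB` satisfies
`|φ'(t₀)| = (1/6) · l_AB · l_CD / V · |l_CD'(t₀)|`. -/
theorem abs_deriv_dihedralAngle_eq (A B C D : ℝ → EuclideanSpace ℝ (Fin 3)) (t₀ : ℝ)
    (hA : DifferentiableAt ℝ A t₀) (hB : DifferentiableAt ℝ B t₀)
    (hC : DifferentiableAt ℝ C t₀) (hD : DifferentiableAt ℝ D t₀)
    (hV : tetVol (A t₀) (B t₀) (C t₀) (D t₀) ≠ 0)
    (hAB : ∀ t, dist (A t) (B t) = dist (A t₀) (B t₀))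
    (hAC : ∀ t, dist (A t) (C t) = dist (A t₀) (C t₀))
    (hAD : ∀ t, dist (A t) (D t) = dist (A t₀) (D t₀))
    (hBC : ∀ t, dist (B t) (C t) = dist (B t₀) (C t₀))
    (hBD : ∀ t, dist (B t) (D t) = dist (B t₀) (D t₀)) :
    |deriv (fun t => dihedralAngle (A t) (B t) (C t) (D t)) t₀| =
      1 / 6 * dist (A t₀) (B t₀) * dist (C t₀) (D t₀) /
          tetVol (A t₀) (B t₀) (C t₀) (D t₀) *
        |deriv (fun t => dist (C t) (D t)) t₀| := by
  have hdet : (Matrix.of fun i j : Fin 3 =>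
      (![B t₀ - A t₀, C t₀ - A t₀, D t₀ - A t₀] j) i).det ≠ 0 := by
    intro h
    apply hV
    simp [tetVol, h]
  -- the five constant lengths
  set lab := dist (A t₀) (B t₀) with hlab
  set lac := dist (A t₀) (C t₀) with hlac
  set lad := dist (A t₀) (D t₀) with hlad
  set bb : ℝ := lab ^ 2 with hbbdef
  set bc : ℝ := (lab ^ 2 + lac ^ 2 - dist (B t₀) (C t₀) ^ 2) / 2 with hbcdef
  set bd : ℝ := (lab ^ 2 + lad ^ 2 - dist (B t₀) (D t₀) ^ 2) / 2 with hbddef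
  -- basic constancy facts
  have hnormB : ∀ t, ‖B t - A t‖ = lab := by
    intro t; rw [← dist_eq_norm']; exact hAB t
  have hnormC : ∀ t, ‖C t - A t‖ = lac := by
    intro t; rw [← dist_eq_norm']; exact hAC t
  have hnormD : ∀ t, ‖D t - A t‖ = lad := by
    intro t; rw [← dist_eq_norm']; exact hAD t
  have hbbt : ∀ t, ⟪B t - A t, B t - A t⟫ = bb := by
    intro t; rw [real_inner_self_eq_norm_sq, hnormB]
  have hcct : ∀ t, ⟪C t - A t, C t - A t⟫ = lac ^ 2 := by
    intro t; rw [real_inner_self_eq_norm_sq, hnormC]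
  have hddt : ∀ t, ⟪D t - A t, D t - A t⟫ = lad ^ 2 := by
    intro t; rw [real_inner_self_eq_norm_sq, hnormD]
  have hbct : ∀ t, ⟪B t - A t, C t - A t⟫ = bc := by
    intro t
    have h := norm_sub_sq_real (B t - A t) (C t - A t)
    rw [sub_sub_sub_cancel_right, ← dist_eq_norm, hBC t, hnormB, hnormC] at h
    rw [hbcdef]; linarith
  have hbdt : ∀ t, ⟪B t - A t, D t - A t⟫ = bd := by
    intro t
    have h := norm_sub_sq_real (B t - A t) (D t - A t)
    rw [sub_sub_sub_cancel_right, ← dist_eq_norm, hBD t, hnormB, hnormD] at h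
    rw [hbddef]; linarith
  have hcdt : ∀ t, ⟪C t - A t, D t - A t⟫
      = (lac ^ 2 + lad ^ 2 - dist (C t) (D t) ^ 2) / 2 := by
    intro t
    have h := norm_sub_sq_real (C t - A t) (D t - A t)
    rw [sub_sub_sub_cancel_right, ← dist_eq_norm, hnormC, hnormD] at h
    linarith
  -- nondegeneracy facts
  have hb0 : B t₀ - A t₀ ≠ 0 := by
    intro h
    apply hdet
    rw [h]
    exact det_fst_zero _ _
  have hlabpos : 0 < lab := by
    rw [hlab, dist_pos]; intro h; exact hb0 (by rw [h, sub_self])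
  have hbbpos : 0 < bb := by positivity
  have hbne : ∀ t, B t - A t ≠ 0 := by
    intro t h
    have := hnormB t
    rw [h, norm_zero] at this
    exact hlabpos.ne this
  have hCD0 : C t₀ ≠ D t₀ := by
    intro h
    apply hdet
    rw [h]
    exact det_mid_eq _ _
  have hlcdpos : 0 < dist (C t₀) (D t₀) := dist_pos.mpr hCD0
  
  -- abbreviations for the reduced quantities
  set p2 : ℝ := lac ^ 2 - bc ^ 2 / bb with hp2def
  set q2 : ℝ := lad ^ 2 - bd ^ 2 / bb with hq2def
  set w : ℝ → ℝ := fun t => (lac ^ 2 + lad ^ 2 - dist (C t) (D t) ^ 2) / 2 - bc * bd / bb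
    with hwdef
  -- nonnegativity of p2, q2
  have hp2nn : 0 ≤ p2 := by
    have h := perp_normsq' (B t₀ - A t₀) (C t₀ - A t₀) (hbne t₀)
    rw [hcct, hbct, hbbt] at h
    rw [hp2def, ← h]
    positivity
  have hq2nn : 0 ≤ q2 := by
    have h := perp_normsq' (B t₀ - A t₀) (D t₀ - A t₀) (hbne t₀)
    rw [hddt, hbdt, hbbt] at h
    rw [hq2def, ← h]
    positivity
  -- the Gram determinant identity
  set dt : ℝ := (Matrix.of fun i j : Fin 3 =>
      (![B t₀ - A t₀, C t₀ - A t₀, D t₀ - A t₀] j) i).det with hdtdef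
  have hDet2 : dt ^ 2 = bb * (p2 * q2 - (w t₀) ^ 2) := by
    have hg := gram_sq (B t₀ - A t₀) (C t₀ - A t₀) (D t₀ - A t₀)
    rw [hbbt, hcct, hddt, hbct, hbdt, hcdt] at hg
    rw [hdtdef, hg, hwdef, hp2def, hq2def]
    field_simp
    ring
  have hdt2pos : 0 < dt ^ 2 := lt_of_le_of_ne (sq_nonneg _) (Ne.symm (pow_ne_zero 2 hdet))
  have hD2pos : 0 < p2 * q2 - (w t₀) ^ 2 := by
    have h1 : p2 * q2 - (w t₀) ^ 2 = dt ^ 2 / bb := by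
      rw [hDet2]; field_simp
    rw [h1]; exact div_pos hdt2pos hbbpos
  have hpqpos : 0 < p2 * q2 := lt_of_le_of_lt (sq_nonneg (w t₀)) (by linarith)
  have hp2pos : 0 < p2 := hp2nn.lt_of_ne fun h => by
    rw [← h, zero_mul] at hpqpos; exact lt_irrefl 0 hpqpos
  have hq2pos : 0 < q2 := hq2nn.lt_of_ne fun h => by
    rw [← h, mul_zero] at hpqpos; exact lt_irrefl 0 hpqpos
  set s : ℝ := Real.sqrt p2 with hsdef
  set r : ℝ := Real.sqrt q2 with hrdef
  have hspos : 0 < s := Real.sqrt_pos.mpr hp2pos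
  have hrpos : 0 < r := Real.sqrt_pos.mpr hq2pos
  have hs2 : s ^ 2 = p2 := Real.sq_sqrt hp2nn
  have hr2 : r ^ 2 = q2 := Real.sq_sqrt hq2nn
  -- the dihedral angle as an arccos of an explicit function
  set g : ℝ → ℝ := fun t => w t / (s * r) with hgdef
  have key : ∀ t, dihedralAngle (A t) (B t) (C t) (D t) = Real.arccos (g t) := by
    intro t
    have h1 := perp_inner' (B t - A t) (C t - A t) (D t - A t) (hbne t)
    rw [hbct, hbdt, hbbt, hcdt] at h1
    have h2 := perp_normsq' (B t - A t) (C t - A t) (hbne t)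
    rw [hcct, hbct, hbbt] at h2
    have h3 := perp_normsq' (B t - A t) (D t - A t) (hbne t)
    rw [hddt, hbdt, hbbt] at h3
    simp only [dihedralAngle, InnerProductGeometry.angle]
    rw [h1]
    rw [← Real.sqrt_sq (norm_nonneg ((C t - A t) -
      (⟪C t - A t, ‖B t - A t‖⁻¹ • (B t - A t)⟫ : ℝ) • (‖B t - A t‖⁻¹ • (B t - A t)))), h2]
    rw [← Real.sqrt_sq (norm_nonneg ((D t - A t) -
      (⟪D t - A t, ‖B t - A t‖⁻¹ • (B t - A t)⟫ : ℝ) • (‖B t - A t‖⁻¹ • (B t - A t)))), h3]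
  -- derivative of g
  have hdistDiff : DifferentiableAt ℝ (fun t => dist (C t) (D t)) t₀ := hC.dist ℝ hD hCD0
  set l' : ℝ := deriv (fun t => dist (C t) (D t)) t₀ with hl'def
  set l0 : ℝ := dist (C t₀) (D t₀) with hl0def
  have hl : HasDerivAt (fun t => dist (C t) (D t)) l' t₀ := hdistDiff.hasDerivAt
  have hg' : HasDerivAt g (-(↑(2:ℕ) * l0 ^ (2-1) * l') / 2 / (s * r)) t₀ := by
    exact (((hl.pow 2).const_sub (lac ^ 2 + lad ^ 2)).div_const 2 |>.sub_const
      (bc * bd / bb)).div_const (s * r)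
  -- the value g t₀ is strictly between -1 and 1
  have hg0sq : (g t₀) ^ 2 < 1 := by
    rw [hgdef]
    rw [div_pow, mul_pow, hs2, hr2]
    rw [div_lt_one (by positivity)]
    linarith
  have hgne1 : g t₀ ≠ 1 := by intro h; rw [h] at hg0sq; norm_num at hg0sq
  have hgnem1 : g t₀ ≠ -1 := by intro h; rw [h] at hg0sq; norm_num at hg0sq
  have hXpos : 0 < 1 - (g t₀) ^ 2 := by linarith
  have harccos := (Real.hasDerivAt_arccos hgnem1 hgne1).comp t₀ hg'
  have hphi : deriv (fun t => dihedralAngle (A t) (B t) (C t) (D t)) t₀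
      = -(1 / Real.sqrt (1 - g t₀ ^ 2)) * (-(↑(2:ℕ) * l0 ^ (2-1) * l') / 2 / (s * r)) := by
    have : (fun t => dihedralAngle (A t) (B t) (C t) (D t)) = Real.arccos ∘ g := by
      funext t; exact key t
    rw [this]
    exact harccos.deriv
  -- final computation
  have hXsqrtpos : 0 < Real.sqrt (1 - g t₀ ^ 2) := Real.sqrt_pos.mpr hXpos
  have hX2 : Real.sqrt (1 - g t₀ ^ 2) ^ 2 = 1 - g t₀ ^ 2 := Real.sq_sqrt hXpos.le
  have hg0sq' : (g t₀) ^ 2 = (w t₀) ^ 2 / (p2 * q2) := by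
    simp only [hgdef, div_pow, mul_pow, hs2, hr2]
  have hdetabs : |dt| = lab * (s * r * Real.sqrt (1 - g t₀ ^ 2)) := by
    rw [← Real.sqrt_sq_eq_abs, ← Real.sqrt_sq (by positivity :
      (0:ℝ) ≤ lab * (s * r * Real.sqrt (1 - g t₀ ^ 2)))]
    congr 1
    rw [hDet2]
    have : (lab * (s * r * Real.sqrt (1 - g t₀ ^ 2))) ^ 2
        = lab ^ 2 * (s ^ 2 * r ^ 2 * (Real.sqrt (1 - g t₀ ^ 2)) ^ 2) := by ring
    rw [this, hX2, hs2, hr2, hg0sq', hbbdef]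
    have hpq : p2 * q2 ≠ 0 := by positivity
    field_simp
  have hTet : tetVol (A t₀) (B t₀) (C t₀) (D t₀) = |dt| / 6 := by rw [tetVol, hdtdef]
  rw [hphi, hTet, hdetabs]
  have hval : -(1 / Real.sqrt (1 - g t₀ ^ 2)) * (-(↑(2:ℕ) * l0 ^ (2-1) * l') / 2 / (s * r))
      = (l0 / (s * r * Real.sqrt (1 - g t₀ ^ 2))) * l' := by
    field_simp
    ring
  rw [hval, abs_mul, abs_of_pos (by positivity : (0:ℝ) < l0 / (s * r * Real.sqrt (1 - g t₀ ^ 2)))]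
  field_simp
end

section
/- Let A, B, C, D, E : ℝ → ℝ³ be curves, each differentiable at t₀, such that the four tetrahedra with vertex quadruples (B,C,D,E), (A,C,D,E), (A,B,C,E), (A,B,C,D) are all nondegenerate at t₀, and such that all ten pairwise distances among the five points are constant in t except possibly l_AB(t) := dist(A(t),B(t)) and l_DE(t) := dist(D(t),E(t)). Then |l_AB · l_AB'(t₀) · V_{BCDE} · V_{ACDE}| = |l_DE · l_DE'(t₀) · V_{ABCE} · V_{ABCD}|, where all lengths and volumes are evaluated at t₀. -/
open scoped RealInnerProductSpace

/-- Explicit signed `3×3` determinant of three vectors in `ℝ³`. -/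
noncomputable def sdet (u v w : EuclideanSpace ℝ (Fin 3)) : ℝ :=
  u 0 * (v 1 * w 2 - v 2 * w 1) - v 0 * (u 1 * w 2 - u 2 * w 1) + w 0 * (u 1 * v 2 - u 2 * v 1)

lemma tetVol_eq (A B C D : EuclideanSpace ℝ (Fin 3)) :
    tetVol A B C D = |sdet (B - A) (C - A) (D - A)| / 6 := by
  unfold tetVol
  congr 2
  rw [Matrix.det_fin_three]
  simp only [Matrix.of_apply, Matrix.cons_val', Matrix.cons_val_zero, Matrix.cons_val_one,
    Matrix.head_cons, Matrix.cons_val_two, Matrix.tail_cons, Matrix.empty_val',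
    Matrix.cons_val_fin_one, Matrix.head_fin_const, sdet]
  ring

/-- The key algebraic "self-stress" identity for five points of `ℝ³`. -/
lemma stress (A B C D E a b c d e : EuclideanSpace ℝ (Fin 3))
    (hAC : ⟪A - C, a - c⟫ = 0) (hAD : ⟪A - D, a - d⟫ = 0) (hAE : ⟪A - E, a - e⟫ = 0)
    (hBC : ⟪B - C, b - c⟫ = 0) (hBD : ⟪B - D, b - d⟫ = 0) (hBE : ⟪B - E, b - e⟫ = 0)
    (hCD : ⟪C - D, c - d⟫ = 0) (hCE : ⟪C - E, c - e⟫ = 0) :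
    sdet (C - B) (D - B) (E - B) * sdet (C - A) (D - A) (E - A) * ⟪A - B, a - b⟫
      = -(sdet (B - A) (C - A) (E - A) * sdet (B - A) (C - A) (D - A) * ⟪D - E, d - e⟫) := by
  have e1A : -(sdet (C - A) (D - A) (E - A)) * ⟪A - B, a⟫
      + sdet (B - A) (D - A) (E - A) * ⟪A - C, a⟫
      - sdet (B - A) (C - A) (E - A) * ⟪A - D, a⟫
      + sdet (B - A) (C - A) (D - A) * ⟪A - E, a⟫ = 0 := by
    simp only [sdet, PiLp.inner_apply, RCLike.inner_apply, conj_trivial, PiLp.sub_apply,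
      Fin.sum_univ_three]
    ring
  have e1B : sdet (C - B) (D - B) (E - B) * ⟪B - A, b⟫
      + sdet (B - A) (D - A) (E - A) * ⟪B - C, b⟫
      - sdet (B - A) (C - A) (E - A) * ⟪B - D, b⟫
      + sdet (B - A) (C - A) (D - A) * ⟪B - E, b⟫ = 0 := by
    simp only [sdet, PiLp.inner_apply, RCLike.inner_apply, conj_trivial, PiLp.sub_apply,
      Fin.sum_univ_three]
    ring
  have e1C : sdet (C - B) (D - B) (E - B) * ⟪C - A, c⟫
      - sdet (C - A) (D - A) (E - A) * ⟪C - B, c⟫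
      - sdet (B - A) (C - A) (E - A) * ⟪C - D, c⟫
      + sdet (B - A) (C - A) (D - A) * ⟪C - E, c⟫ = 0 := by
    simp only [sdet, PiLp.inner_apply, RCLike.inner_apply, conj_trivial, PiLp.sub_apply,
      Fin.sum_univ_three]
    ring
  have e1D : sdet (C - B) (D - B) (E - B) * ⟪D - A, d⟫
      - sdet (C - A) (D - A) (E - A) * ⟪D - B, d⟫
      + sdet (B - A) (D - A) (E - A) * ⟪D - C, d⟫
      + sdet (B - A) (C - A) (D - A) * ⟪D - E, d⟫ = 0 := by
    simp only [sdet, PiLp.inner_apply, RCLike.inner_apply, conj_trivial, PiLp.sub_apply,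
      Fin.sum_univ_three]
    ring
  have e1E : sdet (C - B) (D - B) (E - B) * ⟪E - A, e⟫
      - sdet (C - A) (D - A) (E - A) * ⟪E - B, e⟫
      + sdet (B - A) (D - A) (E - A) * ⟪E - C, e⟫
      - sdet (B - A) (C - A) (E - A) * ⟪E - D, e⟫ = 0 := by
    simp only [sdet, PiLp.inner_apply, RCLike.inner_apply, conj_trivial, PiLp.sub_apply,
      Fin.sum_univ_three]
    ring
  have hp : ∀ X Y x y : EuclideanSpace ℝ (Fin 3),
      (⟪X - Y, x - y⟫ : ℝ) = ⟪X - Y, x⟫ + ⟪Y - X, y⟫ := by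
    intro X Y x y
    simp only [PiLp.inner_apply, RCLike.inner_apply, conj_trivial, PiLp.sub_apply,
      Fin.sum_univ_three]
    ring
  linear_combination (-(sdet (C - B) (D - B) (E - B))) * e1A
    + (sdet (C - A) (D - A) (E - A)) * e1B
    + (-(sdet (B - A) (D - A) (E - A))) * e1C
    + (sdet (B - A) (C - A) (E - A)) * e1D
    + (-(sdet (B - A) (C - A) (D - A))) * e1E
    + (sdet (C - B) (D - B) (E - B) * sdet (C - A) (D - A) (E - A)) * hp A B a b
    + (sdet (B - A) (C - A) (E - A) * sdet (B - A) (C - A) (D - A)) * hp D E d e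
    + (-(sdet (C - B) (D - B) (E - B) * sdet (B - A) (D - A) (E - A))) * (hp A C a c - hAC)
    + (sdet (C - B) (D - B) (E - B) * sdet (B - A) (C - A) (E - A)) * (hp A D a d - hAD)
    + (-(sdet (C - B) (D - B) (E - B) * sdet (B - A) (C - A) (D - A))) * (hp A E a e - hAE)
    + (sdet (C - A) (D - A) (E - A) * sdet (B - A) (D - A) (E - A)) * (hp B C b c - hBC)
    + (-(sdet (C - A) (D - A) (E - A) * sdet (B - A) (C - A) (E - A))) * (hp B D b d - hBD)
    + (sdet (C - A) (D - A) (E - A) * sdet (B - A) (C - A) (D - A)) * (hp B E b e - hBE)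
    + (sdet (B - A) (D - A) (E - A) * sdet (B - A) (C - A) (E - A)) * (hp C D c d - hCD)
    + (-(sdet (B - A) (D - A) (E - A) * sdet (B - A) (C - A) (D - A))) * (hp C E c e - hCE)

lemma inner_deriv_of_const_norm (f : ℝ → EuclideanSpace ℝ (Fin 3)) (t₀ : ℝ)
    (hf : DifferentiableAt ℝ f t₀) (h : ∀ t, ‖f t‖ = ‖f t₀‖) :
    (⟪f t₀, deriv f t₀⟫ : ℝ) = 0 := by
  have h1 : HasDerivAt (fun t => (⟪f t, f t⟫ : ℝ))
      (⟪f t₀, deriv f t₀⟫ + ⟪deriv f t₀, f t₀⟫) t₀ :=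
    hf.hasDerivAt.inner ℝ hf.hasDerivAt
  have h2 : (fun t => (⟪f t, f t⟫ : ℝ)) = fun _ => ‖f t₀‖ * ‖f t₀‖ := by
    funext t; rw [real_inner_self_eq_norm_mul_norm, h t]
  rw [h2] at h1
  have h3 := h1.deriv
  simp only [deriv_const'] at h3
  have h4 := real_inner_comm (f t₀) (deriv f t₀)
  linarith

lemma norm_mul_deriv (f : ℝ → EuclideanSpace ℝ (Fin 3)) (t₀ : ℝ)
    (hf : DifferentiableAt ℝ f t₀) (h0 : f t₀ ≠ 0) :
    ‖f t₀‖ * deriv (fun t => ‖f t‖) t₀ = ⟪f t₀, deriv f t₀⟫ := by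
  have hn : DifferentiableAt ℝ (fun t => ‖f t‖) t₀ := hf.norm ℝ h0
  have h1 : HasDerivAt (fun t => (⟪f t, f t⟫ : ℝ))
      (⟪f t₀, deriv f t₀⟫ + ⟪deriv f t₀, f t₀⟫) t₀ :=
    hf.hasDerivAt.inner ℝ hf.hasDerivAt
  have h2 : HasDerivAt (fun t => ‖f t‖ * ‖f t‖)
      (deriv (fun t => ‖f t‖) t₀ * ‖f t₀‖ + ‖f t₀‖ * deriv (fun t => ‖f t‖) t₀) t₀ :=
    hn.hasDerivAt.mul hn.hasDerivAt
  have h3 : (fun t => (⟪f t, f t⟫ : ℝ)) = fun t => ‖f t‖ * ‖f t‖ := by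
    funext t; rw [real_inner_self_eq_norm_mul_norm]
  rw [h3] at h1
  have h4 := h1.unique h2
  have h5 := real_inner_comm (f t₀) (deriv f t₀)
  linarith

/-- For five differentiably moving points `A, B, C, D, E` in `ℝ³` whose ten pairwise distances
are all constant except possibly `l_AB` and `l_DE`, and whose four tetrahedra `BCDE`, `ACDE`,
`ABCE`, `ABCD` are nondegenerate at `t₀`, one has
`|l_AB · l_AB' · V_{BCDE} · V_{ACDE}| = |l_DE · l_DE' · V_{ABCE} · V_{ABCD}|` at `t₀`. -/
theorem length_derivative_balance (A B C D E : ℝ → EuclideanSpace ℝ (Fin 3)) (t₀ : ℝ)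
    (hA : DifferentiableAt ℝ A t₀) (hB : DifferentiableAt ℝ B t₀)
    (hC : DifferentiableAt ℝ C t₀) (hD : DifferentiableAt ℝ D t₀)
    (hE : DifferentiableAt ℝ E t₀)
    (hV1 : tetVol (B t₀) (C t₀) (D t₀) (E t₀) ≠ 0)
    (hV2 : tetVol (A t₀) (C t₀) (D t₀) (E t₀) ≠ 0)
    (hV3 : tetVol (A t₀) (B t₀) (C t₀) (E t₀) ≠ 0)
    (hV4 : tetVol (A t₀) (B t₀) (C t₀) (D t₀) ≠ 0)
    (hAC : ∀ t, dist (A t) (C t) = dist (A t₀) (C t₀))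
    (hAD : ∀ t, dist (A t) (D t) = dist (A t₀) (D t₀))
    (hAE : ∀ t, dist (A t) (E t) = dist (A t₀) (E t₀))
    (hBC : ∀ t, dist (B t) (C t) = dist (B t₀) (C t₀))
    (hBD : ∀ t, dist (B t) (D t) = dist (B t₀) (D t₀))
    (hBE : ∀ t, dist (B t) (E t) = dist (B t₀) (E t₀))
    (hCD : ∀ t, dist (C t) (D t) = dist (C t₀) (D t₀))
    (hCE : ∀ t, dist (C t) (E t) = dist (C t₀) (E t₀)) :
    |dist (A t₀) (B t₀) * deriv (fun t => dist (A t) (B t)) t₀ *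
        tetVol (B t₀) (C t₀) (D t₀) (E t₀) * tetVol (A t₀) (C t₀) (D t₀) (E t₀)| =
      |dist (D t₀) (E t₀) * deriv (fun t => dist (D t) (E t)) t₀ *
        tetVol (A t₀) (B t₀) (C t₀) (E t₀) * tetVol (A t₀) (B t₀) (C t₀) (D t₀)| := by
  have mk0 : ∀ (F G : ℝ → EuclideanSpace ℝ (Fin 3)), DifferentiableAt ℝ F t₀ →
      DifferentiableAt ℝ G t₀ → (∀ t, dist (F t) (G t) = dist (F t₀) (G t₀)) →
      (⟪F t₀ - G t₀, deriv F t₀ - deriv G t₀⟫ : ℝ) = 0 := by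
    intro F G hF hG h
    have hd : DifferentiableAt ℝ (fun t => F t - G t) t₀ := hF.sub hG
    have hc : ∀ t, ‖F t - G t‖ = ‖F t₀ - G t₀‖ := by
      intro t; rw [← dist_eq_norm, ← dist_eq_norm, h t]
    have h' := inner_deriv_of_const_norm (fun t => F t - G t) t₀ hd hc
    rwa [deriv_fun_sub hF hG] at h'
  have mk1 : ∀ (F G : ℝ → EuclideanSpace ℝ (Fin 3)), DifferentiableAt ℝ F t₀ →
      DifferentiableAt ℝ G t₀ → F t₀ ≠ G t₀ →
      dist (F t₀) (G t₀) * deriv (fun t => dist (F t) (G t)) t₀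
        = ⟪F t₀ - G t₀, deriv F t₀ - deriv G t₀⟫ := by
    intro F G hF hG hne
    have hd : DifferentiableAt ℝ (fun t => F t - G t) t₀ := hF.sub hG
    have h0 : F t₀ - G t₀ ≠ 0 := sub_ne_zero.mpr hne
    have h := norm_mul_deriv (fun t => F t - G t) t₀ hd h0
    rw [deriv_fun_sub hF hG] at h
    simpa only [dist_eq_norm] using h
  have hABne : A t₀ ≠ B t₀ := by
    intro h
    apply hV4
    rw [tetVol_eq, h, sub_self]
    simp [sdet]
  have hDEne : D t₀ ≠ E t₀ := by
    intro h
    apply hV1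
    have hz : sdet (C t₀ - B t₀) (E t₀ - B t₀) (E t₀ - B t₀) = 0 := by
      simp only [sdet]; ring
    rw [tetVol_eq, h, hz]
    simp
  have key := stress (A t₀) (B t₀) (C t₀) (D t₀) (E t₀)
      (deriv A t₀) (deriv B t₀) (deriv C t₀) (deriv D t₀) (deriv E t₀)
      (mk0 A C hA hC hAC) (mk0 A D hA hD hAD) (mk0 A E hA hE hAE)
      (mk0 B C hB hC hBC) (mk0 B D hB hD hBD) (mk0 B E hB hE hBE)
      (mk0 C D hC hD hCD) (mk0 C E hC hE hCE)
  have habs : |sdet (C t₀ - B t₀) (D t₀ - B t₀) (E t₀ - B t₀)| *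
        |sdet (C t₀ - A t₀) (D t₀ - A t₀) (E t₀ - A t₀)| *
        |(⟪A t₀ - B t₀, deriv A t₀ - deriv B t₀⟫ : ℝ)| =
      |sdet (B t₀ - A t₀) (C t₀ - A t₀) (E t₀ - A t₀)| *
        |sdet (B t₀ - A t₀) (C t₀ - A t₀) (D t₀ - A t₀)| *
        |(⟪D t₀ - E t₀, deriv D t₀ - deriv E t₀⟫ : ℝ)| := by
    have h := congrArg abs key
    rwa [abs_neg, abs_mul, abs_mul, abs_mul, abs_mul] at h
  have habs6 : ∀ x y z : ℝ, |x * (|y| / 6) * (|z| / 6)| = |y| * |z| * |x| / 36 := by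
    intro x y z
    rw [abs_mul, abs_mul, abs_of_nonneg (by positivity : (0:ℝ) ≤ |y| / 6),
      abs_of_nonneg (by positivity : (0:ℝ) ≤ |z| / 6)]
    ring
  rw [tetVol_eq, tetVol_eq, tetVol_eq, tetVol_eq, mk1 A B hA hB hABne, mk1 D E hD hE hDEne,
    habs6, habs6]
  linarith [habs]
end

section
/- Let A, B, C, D, E ∈ ℝ³ with A, B, C affinely independent, D ≠ E, none of A, B, C lying on the line through D and E, and suppose the open segment from D to E meets the interior of the triangle ABC; that is, there exist t ∈ (0,1) and λ₁, λ₂, λ₃ > 0 with λ₁ + λ₂ + λ₃ = 1 such that (1 − t)·D + t·E = λ₁·A + λ₂·B + λ₃·C. Then the three dihedral angles at the edge DE satisfy ∠(B, DE, C) + ∠(C, DE, A) + ∠(A, DE, B) = 2π. -/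
open InnerProductGeometry Real
open scoped RealInnerProductSpace

section Aux

variable {V : Type*} [NormedAddCommGroup V] [InnerProductSpace ℝ V]

/-- If two of three vectors are nonzero and a positive combination of them vanishes,
the three pairwise angles sum to `2π`. -/
theorem angle_sum_of_pos_comb_eq_zero {a b c : V} (ha : a ≠ 0) (hb : b ≠ 0)
    {l₁ l₂ l₃ : ℝ} (h₁ : 0 < l₁) (h₂ : 0 < l₂) (h₃ : 0 < l₃)
    (h : l₁ • a + l₂ • b + l₃ • c = 0) :
    angle b c + angle c a + angle a b = 2 * π := by
  have hx : l₁ • a ≠ 0 := smul_ne_zero h₁.ne' ha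
  have hy : (-(l₂ • b)) ≠ 0 := neg_ne_zero.2 (smul_ne_zero h₂.ne' hb)
  have hsub : l₁ • a - -(l₂ • b) = -(l₃ • c) := by
    have : l₃ • c = -(l₁ • a + l₂ • b) := by
      rw [eq_neg_iff_add_eq_zero]; linear_combination (norm := abel) h
    rw [this]; abel
  have hT := angle_add_angle_sub_add_angle_sub_eq_pi (l₁ • a) hy
  rw [hsub] at hT
  have hsub2 : -(l₂ • b) - l₁ • a = l₃ • c := by
    rw [← neg_sub (l₁ • a), hsub, neg_neg]
  rw [hsub2] at hT
  rw [angle_neg_right, angle_smul_left_of_pos _ _ h₁, angle_smul_right_of_pos _ _ h₂,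
    angle_neg_right, angle_smul_left_of_pos _ _ h₁, angle_smul_right_of_pos _ _ h₃,
    angle_neg_left, angle_smul_left_of_pos _ _ h₂, angle_smul_right_of_pos _ _ h₃] at hT
  have hca : angle a c = angle c a := angle_comm _ _
  linarith [hca ▸ hT]

/-- A positive combination of orthogonal projections equals the projection of the
combination. -/
theorem proj_comb (u x y z : V) (l₁ l₂ l₃ : ℝ) :
    l₁ • (x - ⟪x, u⟫ • u) + l₂ • (y - ⟪y, u⟫ • u) + l₃ • (z - ⟪z, u⟫ • u)
      = (l₁ • x + l₂ • y + l₃ • z) - ⟪l₁ • x + l₂ • y + l₃ • z, u⟫ • u := by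
  simp only [inner_add_left, real_inner_smul_left]
  module

end Aux

/-- If the open segment `DE` passes through the interior of the triangle `ABC`, then the three
dihedral angles at the edge `DE` sum to `2π`:
`∠(B, DE, C) + ∠(C, DE, A) + ∠(A, DE, B) = 2π`. -/
theorem dihedralAngle_sum_around_edge (A B C D E : EuclideanSpace ℝ (Fin 3))
    (hABC : AffineIndependent ℝ ![A, B, C]) (hDE : D ≠ E)
    (hA : A ∉ affineSpan ℝ ({D, E} : Set (EuclideanSpace ℝ (Fin 3))))
    (hB : B ∉ affineSpan ℝ ({D, E} : Set (EuclideanSpace ℝ (Fin 3))))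
    (hC : C ∉ affineSpan ℝ ({D, E} : Set (EuclideanSpace ℝ (Fin 3))))
    (hseg : ∃ t ∈ Set.Ioo (0 : ℝ) 1, ∃ l₁ l₂ l₃ : ℝ,
      0 < l₁ ∧ 0 < l₂ ∧ 0 < l₃ ∧ l₁ + l₂ + l₃ = 1 ∧
        (1 - t) • D + t • E = l₁ • A + l₂ • B + l₃ • C) :
    dihedralAngle D E B C + dihedralAngle D E C A + dihedralAngle D E A B = 2 * Real.pi := by
  obtain ⟨t, ht, l₁, l₂, l₃, h₁, h₂, h₃, hsum, heq⟩ := hseg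
  have hw : E - D ≠ 0 := sub_ne_zero.2 hDE.symm
  have hnw : ‖E - D‖ ≠ 0 := norm_ne_zero_iff.2 hw
  set u : EuclideanSpace ℝ (Fin 3) := ‖E - D‖⁻¹ • (E - D) with hu
  have hwu : ⟪E - D, u⟫ = ‖E - D‖ := by
    rw [hu, real_inner_smul_right, real_inner_self_eq_norm_mul_norm]
    field_simp
  have hnu : ‖E - D‖ • u = E - D := by
    rw [hu, smul_smul, mul_inv_cancel₀ hnw, one_smul]
  -- the projections of the three vertices onto the plane orthogonal to `E - D`
  set a : EuclideanSpace ℝ (Fin 3) := A - D - ⟪A - D, u⟫ • u with ha_def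
  set b : EuclideanSpace ℝ (Fin 3) := B - D - ⟪B - D, u⟫ • u with hb_def
  set c : EuclideanSpace ℝ (Fin 3) := C - D - ⟪C - D, u⟫ • u with hc_def
  -- nonvanishing of the projections
  have hproj_ne : ∀ X : EuclideanSpace ℝ (Fin 3),
      X ∉ affineSpan ℝ ({D, E} : Set (EuclideanSpace ℝ (Fin 3))) →
      X - D - ⟪X - D, u⟫ • u ≠ 0 := by
    intro X hX h0
    apply hX
    have hXD : X - D = (⟪X - D, u⟫ * ‖E - D‖⁻¹) • (E - D) := by
      rw [mul_smul, ← hu, ← sub_eq_zero]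
      exact h0
    have hmem := smul_vsub_vadd_mem_affineSpan_pair (⟪X - D, u⟫ * ‖E - D‖⁻¹) D E
    convert hmem using 1
    rw [vsub_eq_sub, vadd_eq_add, ← hXD]
    abel
  have ha : a ≠ 0 := hproj_ne A hA
  have hb : b ≠ 0 := hproj_ne B hB
  have hc : c ≠ 0 := hproj_ne C hC
  -- the vanishing positive combination of projections
  have hkey : l₁ • (A - D) + l₂ • (B - D) + l₃ • (C - D) = t • (E - D) := by
    have h1 : l₁ • (A - D) + l₂ • (B - D) + l₃ • (C - D)
        = (l₁ • A + l₂ • B + l₃ • C) - (l₁ + l₂ + l₃) • D := by module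
    rw [h1, hsum, ← heq]
    module
  have hcomb : l₁ • a + l₂ • b + l₃ • c = 0 := by
    rw [ha_def, hb_def, hc_def, proj_comb, hkey, real_inner_smul_left, hwu, mul_smul, hnu,
      sub_self]
  have hsumangle := angle_sum_of_pos_comb_eq_zero ha hb h₁ h₂ h₃ hcomb
  calc dihedralAngle D E B C + dihedralAngle D E C A + dihedralAngle D E A B
      = angle b c + angle c a + angle a b := rfl
    _ = 2 * π := hsumangle
end

section
/- Let n, m, k be natural numbers, let B be a symmetric invertible real n×n matrix and a a real n×m matrix, and let A be the real (n+m)×(n+m) matrix (indexed by Fin n ⊕ Fin m) with block form A = [[B, −B·a], [−aᵀ·B, aᵀ·B·a]]. Let 𝒜 ⊆ Fin n and ℬ ⊆ Fin m be subsets with |𝒜| = |ℬ| = k. Let A|_{C'} denote the square submatrix of A whose rows and columns are both indexed by the set C' = {inl i : i ∉ 𝒜} ∪ {inr j : j ∈ ℬ} (using one and the same enumeration of C' for rows and for columns, so that det(A|_{C'}) is well defined), and let a_{𝒜,ℬ} denote the k×k submatrix of a with rows indexed by 𝒜 and columns indexed by ℬ (via arbitrary enumerations). Then det(A|_{C'})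 = det(B) · (det(a_{𝒜,ℬ}))². -/
open Matrix

/-- For a symmetric invertible `n×n` matrix `B` and an `n×m` matrix `a`, form the
`(n+m)×(n+m)` block matrix `A = [[B, -B·a], [-aᵀ·B, aᵀ·B·a]]`.  For subsets `𝒜 ⊆ Fin n`,
`ℬ ⊆ Fin m` of equal cardinality `k`, the principal submatrix of `A` indexed by
`C' = {inl i : i ∉ 𝒜} ∪ {inr j : j ∈ ℬ}` (via any enumeration `e`, used for both rows and
columns) has determinant `det B · (det a_{𝒜,ℬ})²`, where `a_{𝒜,ℬ}` is the `k×k` submatrix of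
`a` with rows in `𝒜` and columns in `ℬ` (via any enumerations `r`, `c`). -/
theorem det_principal_submatrix_block (n m k : ℕ)
    (B : Matrix (Fin n) (Fin n) ℝ) (hBsymm : B = Bᵀ) (hBinv : IsUnit B.det)
    (a : Matrix (Fin n) (Fin m) ℝ)
    (𝒜 : Finset (Fin n)) (ℬ : Finset (Fin m)) (h𝒜 : 𝒜.card = k) (hℬ : ℬ.card = k)
    (e : Fin n → Fin n ⊕ Fin m) (he : Function.Injective e)
    (hrange : Set.range e =
      Sum.inl '' (↑(𝒜ᶜ) : Set (Fin n)) ∪ Sum.inr '' (↑ℬ : Set (Fin m)))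
    (r : Fin k → Fin n) (hr : Function.Injective r) (hrrange : Set.range r = ↑𝒜)
    (c : Fin k → Fin m) (hc : Function.Injective c) (hcrange : Set.range c = ↑ℬ) :
    ((Matrix.fromBlocks B (-(B * a)) (-(aᵀ * B)) (aᵀ * B * a)).submatrix e e).det =
      B.det * (a.submatrix r c).det ^ 2 := by
  classical
  -- factor the block matrix
  set V : Matrix (Fin n ⊕ Fin m) (Fin n) ℝ := Matrix.fromRows 1 (-aᵀ) with hV
  have hVT : Vᵀ = Matrix.fromCols 1 (-a) := by
    rw [hV, Matrix.transpose_fromRows]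
    simp
  have hA : Matrix.fromBlocks B (-(B * a)) (-(aᵀ * B)) (aᵀ * B * a) = V * B * Vᵀ := by
    rw [hVT, hV, Matrix.fromRows_mul, Matrix.fromRows_mul_fromCols]
    congr 1 <;> simp [Matrix.mul_assoc]
  set W : Matrix (Fin n) (Fin n) ℝ := V.submatrix e id with hW
  have hsub : (V * B * Vᵀ).submatrix e e = W * B * Wᵀ := by
    ext i j
    simp [Matrix.mul_apply, hW, Finset.sum_mul, Finset.mul_sum]
  -- set up the index equivalences
  have hrmem : ∀ t, r t ∈ 𝒜 := by
    intro t
    have : r t ∈ Set.range r := Set.mem_range_self t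
    rwa [hrrange] at this
  have hcmem : ∀ t, c t ∈ ℬ := by
    intro t
    have : c t ∈ Set.range c := Set.mem_range_self t
    rwa [hcrange] at this
  have hcard : Fintype.card ({x // x ∈ 𝒜ᶜ} ⊕ Fin k) = Fintype.card (Fin n) := by
    have hk : k ≤ n := by
      have := Finset.card_le_univ 𝒜
      simpa [h𝒜] using this
    simp [Finset.card_compl, h𝒜]
    omega
  -- column equivalence
  let F0 : ({x // x ∈ 𝒜ᶜ} ⊕ Fin k) → Fin n := Sum.elim Subtype.val r
  have hF0inj : Function.Injective F0 := by
    rintro (⟨x, hx⟩ | s) (⟨y, hy⟩ | t) h <;> simp [F0] at h ⊢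
    · exact h
    · exact absurd (h ▸ hrmem t) (Finset.mem_compl.mp hx)
    · exact absurd (h ▸ hrmem s) (Finset.mem_compl.mp hy)
    · exact hr h
  let F : ({x // x ∈ 𝒜ᶜ} ⊕ Fin k) ≃ Fin n :=
    Equiv.ofBijective F0 ((Fintype.bijective_iff_injective_and_card F0).2 ⟨hF0inj, hcard⟩)
  -- row equivalence
  let g : ({x // x ∈ 𝒜ᶜ} ⊕ Fin k) → Fin n ⊕ Fin m :=
    Sum.elim (fun x => Sum.inl (x : Fin n)) (fun t => Sum.inr (c t))
  have hg : ∀ z, g z ∈ Set.range e := by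
    rintro (⟨x, hx⟩ | t) <;> rw [hrange]
    · exact Or.inl ⟨x, by simpa using hx, rfl⟩
    · exact Or.inr ⟨c t, by simpa using hcmem t, rfl⟩
  let E0 : ({x // x ∈ 𝒜ᶜ} ⊕ Fin k) → Fin n := fun z => (Equiv.ofInjective e he).symm ⟨g z, hg z⟩
  have hE0 : ∀ z, e (E0 z) = g z := by
    intro z
    exact Equiv.apply_ofInjective_symm he ⟨g z, hg z⟩
  have hginj : Function.Injective g := by
    rintro (⟨x, hx⟩ | s) (⟨y, hy⟩ | t) h <;> simp [g] at h ⊢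
    · exact h
    · exact hc h
  have hE0inj : Function.Injective E0 := by
    intro z w h
    exact hginj (by rw [← hE0 z, ← hE0 w, h])
  let E : ({x // x ∈ 𝒜ᶜ} ⊕ Fin k) ≃ Fin n :=
    Equiv.ofBijective E0 ((Fintype.bijective_iff_injective_and_card E0).2 ⟨hE0inj, hcard⟩)
  -- block structure of the reindexed W
  have hWEF : W.submatrix E F =
      Matrix.fromBlocks 1 0 (Matrix.of fun (s : Fin k) (x : {x // x ∈ 𝒜ᶜ}) => -(a (x : Fin n) (c s)))
        (-(a.submatrix r c)ᵀ) := by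
    ext z w
    have hEz : ∀ z, W (E z) (F w) = V (g z) (F0 w) := by
      intro z
      have h1 : (E : _ → _) z = E0 z := rfl
      have h2 : (F : _ → _) w = F0 w := rfl
      simp only [hW, Matrix.submatrix_apply, id_eq, h1, h2, hE0 z]
    rcases z with x | s <;> rcases w with y | t <;>
      simp [hEz, hV, g, F0, Matrix.one_apply]
    · intro hxy
      exact absurd (hxy ▸ hrmem t) (Finset.mem_compl.mp x.2)
  have hsq : W.det ^ 2 = (a.submatrix r c).det ^ 2 := by
    have h1 : W.submatrix (⇑E) (⇑F) = (W.submatrix E E).submatrix id (F.trans E.symm) := by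
      ext i j
      simp
    have h2 : (W.submatrix (⇑E) (⇑F)).det = (Equiv.Perm.sign (F.trans E.symm) : ℝ) * W.det := by
      rw [h1, Matrix.det_permute', Matrix.det_submatrix_equiv_self]
    have h3 : (W.submatrix (⇑E) (⇑F)).det = (-1 : ℝ) ^ k * (a.submatrix r c).det := by
      rw [hWEF, Matrix.det_fromBlocks_zero₁₂, Matrix.det_one, one_mul, Matrix.det_neg,
        Matrix.det_transpose]
      simp
    have h4 : ((Equiv.Perm.sign (F.trans E.symm) : ℝ)) ^ 2 = 1 := by
      rcases Int.units_eq_one_or (Equiv.Perm.sign (F.trans E.symm)) with h | h <;> simp [h]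
    have h5 := h2.symm.trans h3
    calc W.det ^ 2 = ((Equiv.Perm.sign (F.trans E.symm) : ℝ)) ^ 2 * W.det ^ 2 := by
          rw [h4, one_mul]
      _ = ((Equiv.Perm.sign (F.trans E.symm) : ℝ) * W.det) ^ 2 := by ring
      _ = ((-1 : ℝ) ^ k * (a.submatrix r c).det) ^ 2 := by rw [h5]
      _ = (a.submatrix r c).det ^ 2 := by
          rw [mul_pow, ← pow_mul, mul_comm k 2, pow_mul]
          norm_num
  rw [hA, hsub, Matrix.det_mul, Matrix.det_mul, Matrix.det_transpose]
  have : W.det * B.det * W.det = B.det * W.det ^ 2 := by ring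
  rw [this, hsq]
end

section
/- Let M be a symmetric real (n+m)×(n+m) matrix written in block form M = [[B, C], [Cᵀ, D]] with B an n×n block. If B is invertible and rank M = n (i.e. the rank of M equals the rank of B), then D = Cᵀ·B⁻¹·C. -/
open Matrix

/-- If a symmetric block matrix `M = [[B, C], [Cᵀ, D]]` has invertible upper-left block `B` and
`rank M = n` (the size of `B`), then `D = Cᵀ · B⁻¹ · C`. -/
theorem lower_block_eq_of_rank (n m : ℕ)
    (B : Matrix (Fin n) (Fin n) ℝ) (C : Matrix (Fin n) (Fin m) ℝ)
    (D : Matrix (Fin m) (Fin m) ℝ) (hB : B = Bᵀ) (hD : D = Dᵀ)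
    (hBinv : IsUnit B.det) (hrank : (Matrix.fromBlocks B C Cᵀ D).rank = n) :
    D = Cᵀ * B⁻¹ * C := by
  set M := Matrix.fromBlocks B C Cᵀ D with hM
  set S := D - Cᵀ * B⁻¹ * C with hS
  -- the parametrization of the candidate kernel
  set ψ : (Fin m → ℝ) →ₗ[ℝ] (Fin n ⊕ Fin m → ℝ) :=
    { toFun := fun y => Sum.elim ((-(B⁻¹ * C)) *ᵥ y) y
      map_add' := by
        intro x y
        funext i
        cases i <;> simp [Matrix.mulVec_add]
      map_smul' := by
        intro c x
        funext i
        cases i <;> simp [Matrix.mulVec_smul] } with hψ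
  have hψ_inj : Function.Injective ψ := by
    intro x y hxy
    have := congrFun hxy
    funext i
    simpa [hψ] using this (Sum.inr i)
  -- image of ψ under M
  have hMψ : ∀ y : Fin m → ℝ, M *ᵥ ψ y = Sum.elim (0 : Fin n → ℝ) (S *ᵥ y) := by
    intro y
    have h1 : B *ᵥ ((-(B⁻¹ * C)) *ᵥ y) + C *ᵥ y = 0 := by
      rw [Matrix.mulVec_mulVec, Matrix.mul_neg, Matrix.mul_nonsing_inv_cancel_left _ _ hBinv,
        Matrix.neg_mulVec, neg_add_cancel]
    have h2 : Cᵀ *ᵥ ((-(B⁻¹ * C)) *ᵥ y) + D *ᵥ y = S *ᵥ y := by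
      rw [Matrix.mulVec_mulVec, hS, Matrix.sub_mulVec, Matrix.mul_neg, Matrix.neg_mulVec,
        ← Matrix.mul_assoc]
      abel
    simp only [hψ, LinearMap.coe_mk, AddHom.coe_mk, hM, Matrix.fromBlocks_mulVec,
      Sum.elim_comp_inl, Sum.elim_comp_inr, h1, h2]
  -- kernel of M is contained in range of ψ
  have hker : LinearMap.ker M.mulVecLin ≤ LinearMap.range ψ := by
    intro x hx
    have hx' : M *ᵥ x = 0 := hx
    have hx2 : M *ᵥ Sum.elim (x ∘ Sum.inl) (x ∘ Sum.inr) = 0 := by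
      rwa [Sum.elim_comp_inl_inr]
    rw [hM, Matrix.fromBlocks_mulVec] at hx2
    have htop : B *ᵥ (x ∘ Sum.inl) + C *ᵥ (x ∘ Sum.inr) = 0 := by
      funext i
      simpa using congrFun hx2 (Sum.inl i)
    have hxl : x ∘ Sum.inl = (-(B⁻¹ * C)) *ᵥ (x ∘ Sum.inr) := by
      have : B⁻¹ *ᵥ (B *ᵥ (x ∘ Sum.inl) + C *ᵥ (x ∘ Sum.inr)) = 0 := by
        rw [htop]; simp
      rw [Matrix.mulVec_add, Matrix.mulVec_mulVec, Matrix.mulVec_mulVec,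
        Matrix.nonsing_inv_mul _ hBinv] at this
      have h := eq_neg_of_add_eq_zero_left this
      rw [Matrix.one_mulVec] at h
      rw [h, Matrix.neg_mulVec]
    refine ⟨x ∘ Sum.inr, ?_⟩
    funext i
    cases i with
    | inl i => simp [hψ, ← hxl]
    | inr i => simp [hψ]
  -- dimension count
  have hrank' : M.rank = n := hrank
  have hdim : Module.finrank ℝ (LinearMap.ker M.mulVecLin) = m := by
    have h := LinearMap.finrank_range_add_finrank_ker M.mulVecLin
    rw [Module.finrank_pi] at h
    have : M.rank + Module.finrank ℝ (LinearMap.ker M.mulVecLin) = n + m := by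
      rw [Matrix.rank]
      simpa using h
    omega
  have hdimψ : Module.finrank ℝ (LinearMap.range ψ) = m := by
    rw [LinearMap.finrank_range_of_inj hψ_inj, Module.finrank_pi]
    simp
  have heq : LinearMap.ker M.mulVecLin = LinearMap.range ψ :=
    Submodule.eq_of_le_of_finrank_eq hker (by rw [hdim, hdimψ])
  -- conclude S = 0
  have hS0 : S = 0 := by
    ext i j
    have hmem : ψ (Pi.single j 1) ∈ LinearMap.ker M.mulVecLin := by
      rw [heq]; exact ⟨Pi.single j 1, rfl⟩
    have h0 : M *ᵥ ψ (Pi.single j 1) = 0 := hmem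
    have := congrFun ((hMψ (Pi.single j 1)).symm.trans h0) (Sum.inr i)
    simpa [Matrix.mulVec_single] using this
  rw [hS] at hS0
  exact sub_eq_zero.mp hS0
end

section
/- Define H : ℝ⁶ → ℝ⁶ by sending (x_b, x_c, y_c, x_d, y_d, z_d) to the six pairwise distances (|AB|, |AC|, |BC|, |AD|, |BD|, |CD|) among the points A = (0,0,0), B = (x_b, 0, 0), C = (x_c, y_c, 0), D = (x_d, y_d, z_d) in ℝ³. At every point where x_b > 0, y_c > 0, z_d ≠ 0 and all six distances are nonzero, H is differentiable and (the product of the six distances) · |det(DH)| = x_b² · y_c · 6V, where DH is the derivative of H at that point viewed as a 6×6 matrix and V = x_b · y_c · |z_d| / 6 is the volume of the tetrahedron ABCD. -/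
/-- The six pairwise distances `(|AB|, |AC|, |BC|, |AD|, |BD|, |CD|)` among the points
`A = (0,0,0)`, `B = (x_b,0,0)`, `C = (x_c,y_c,0)`, `D = (x_d,y_d,z_d)` in `ℝ³`, as a map of
`(x_b, x_c, y_c, x_d, y_d, z_d)`. -/
noncomputable def tetLengths : (Fin 6 → ℝ) → (Fin 6 → ℝ) := fun v =>
  ![Real.sqrt ((v 0) ^ 2),
    Real.sqrt ((v 1) ^ 2 + (v 2) ^ 2),
    Real.sqrt ((v 1 - v 0) ^ 2 + (v 2) ^ 2),
    Real.sqrt ((v 3) ^ 2 + (v 4) ^ 2 + (v 5) ^ 2),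
    Real.sqrt ((v 3 - v 0) ^ 2 + (v 4) ^ 2 + (v 5) ^ 2),
    Real.sqrt ((v 3 - v 1) ^ 2 + (v 4 - v 2) ^ 2 + (v 5) ^ 2)]

set_option maxRecDepth 200000 in
set_option maxHeartbeats 3000000 in
/-- At every point with `x_b > 0`, `y_c > 0`, `z_d ≠ 0` and all six distances nonzero, the map
`H = tetLengths` is differentiable, and
`(∏ of the six distances) · |det DH| = x_b² · y_c · 6V`, where `V = x_b · y_c · |z_d| / 6` is
the volume of the tetrahedron `ABCD`. -/
theorem tetLengths_jacobian (p : Fin 6 → ℝ) (hxb : 0 < p 0) (hyc : 0 < p 2) (hzd : p 5 ≠ 0)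
    (hdist : ∀ i, tetLengths p i ≠ 0) :
    DifferentiableAt ℝ tetLengths p ∧
      (∏ i, tetLengths p i) *
          |(Matrix.of fun i j : Fin 6 =>
            fderiv ℝ tetLengths p (Pi.single j 1) i).det| =
        (p 0) ^ 2 * p 2 * (6 * (p 0 * p 2 * |p 5| / 6)) := by
  -- name the six square roots
  set s0 := Real.sqrt ((p 0) ^ 2) with hs0e
  set s1 := Real.sqrt ((p 1) ^ 2 + (p 2) ^ 2) with hs1e
  set s2 := Real.sqrt ((p 1 - p 0) ^ 2 + (p 2) ^ 2) with hs2e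
  set s3 := Real.sqrt ((p 3) ^ 2 + (p 4) ^ 2 + (p 5) ^ 2) with hs3e
  set s4 := Real.sqrt ((p 3 - p 0) ^ 2 + (p 4) ^ 2 + (p 5) ^ 2) with hs4e
  set s5 := Real.sqrt ((p 3 - p 1) ^ 2 + (p 4 - p 2) ^ 2 + (p 5) ^ 2) with hs5e
  have hs0 : s0 ≠ 0 := hdist 0
  have hs1 : s1 ≠ 0 := hdist 1
  have hs2 : s2 ≠ 0 := hdist 2
  have hs3 : s3 ≠ 0 := hdist 3
  have hs4 : s4 ≠ 0 := hdist 4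
  have hs5 : s5 ≠ 0 := hdist 5
  have hn0 : 0 ≤ s0 := hs0e ▸ Real.sqrt_nonneg _
  have hn1 : 0 ≤ s1 := hs1e ▸ Real.sqrt_nonneg _
  have hn2 : 0 ≤ s2 := hs2e ▸ Real.sqrt_nonneg _
  have hn3 : 0 ≤ s3 := hs3e ▸ Real.sqrt_nonneg _
  have hn4 : 0 ≤ s4 := hs4e ▸ Real.sqrt_nonneg _
  have hn5 : 0 ≤ s5 := hs5e ▸ Real.sqrt_nonneg _
  have hq0 : (p 0) ^ 2 ≠ 0 := fun h => hs0 (by rw [hs0e, h]; exact Real.sqrt_zero)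
  have hq1 : (p 1) ^ 2 + (p 2) ^ 2 ≠ 0 := fun h => hs1 (by rw [hs1e, h]; exact Real.sqrt_zero)
  have hq2 : (p 1 - p 0) ^ 2 + (p 2) ^ 2 ≠ 0 := fun h =>
    hs2 (by rw [hs2e, h]; exact Real.sqrt_zero)
  have hq3 : (p 3) ^ 2 + (p 4) ^ 2 + (p 5) ^ 2 ≠ 0 := fun h =>
    hs3 (by rw [hs3e, h]; exact Real.sqrt_zero)
  have hq4 : (p 3 - p 0) ^ 2 + (p 4) ^ 2 + (p 5) ^ 2 ≠ 0 := fun h =>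
    hs4 (by rw [hs4e, h]; exact Real.sqrt_zero)
  have hq5 : (p 3 - p 1) ^ 2 + (p 4 - p 2) ^ 2 + (p 5) ^ 2 ≠ 0 := fun h =>
    hs5 (by rw [hs5e, h]; exact Real.sqrt_zero)
  -- coordinate projections
  have hv : ∀ i : Fin 6, HasFDerivAt (fun v : Fin 6 → ℝ => v i)
      (ContinuousLinearMap.proj (R := ℝ) (φ := fun _ : Fin 6 => ℝ) i) p :=
    fun i => hasFDerivAt_apply i p
  set P : Fin 6 → ((Fin 6 → ℝ) →L[ℝ] ℝ) :=
    fun i => ContinuousLinearMap.proj (R := ℝ) (φ := fun _ : Fin 6 => ℝ) i with hPdef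
  have hsq : ∀ i : Fin 6, HasFDerivAt (fun v : Fin 6 → ℝ => (v i) ^ 2)
      (p i • P i + p i • P i) p := fun i => by
    simp only [pow_two]; exact (hv i).mul (hv i)
  have hdsq : ∀ i j : Fin 6, HasFDerivAt (fun v : Fin 6 → ℝ => (v i - v j) ^ 2)
      ((p i - p j) • (P i - P j) + (p i - p j) • (P i - P j)) p := fun i j => by
    simp only [pow_two]; exact ((hv i).sub (hv j)).mul ((hv i).sub (hv j))
  -- per-component derivatives of tetLengths
  have hc0 : HasFDerivAt (fun v : Fin 6 → ℝ => tetLengths v 0)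
      ((1 / (2 * s0)) • (p 0 • P 0 + p 0 • P 0)) p := by
    have e : (fun v : Fin 6 → ℝ => tetLengths v 0)
        = Real.sqrt ∘ (fun v : Fin 6 → ℝ => (v 0) ^ 2) := by funext v; rfl
    rw [e]; exact (Real.hasDerivAt_sqrt hq0).comp_hasFDerivAt p (hsq 0)
  have hc1 : HasFDerivAt (fun v : Fin 6 → ℝ => tetLengths v 1)
      ((1 / (2 * s1)) • ((p 1 • P 1 + p 1 • P 1) + (p 2 • P 2 + p 2 • P 2))) p := by
    have e : (fun v : Fin 6 → ℝ => tetLengths v 1)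
        = Real.sqrt ∘ (fun v : Fin 6 → ℝ => (v 1) ^ 2 + (v 2) ^ 2) := by funext v; rfl
    rw [e]; exact (Real.hasDerivAt_sqrt hq1).comp_hasFDerivAt p ((hsq 1).add (hsq 2))
  have hc2 : HasFDerivAt (fun v : Fin 6 → ℝ => tetLengths v 2)
      ((1 / (2 * s2)) • (((p 1 - p 0) • (P 1 - P 0) + (p 1 - p 0) • (P 1 - P 0))
          + (p 2 • P 2 + p 2 • P 2))) p := by
    have e : (fun v : Fin 6 → ℝ => tetLengths v 2)
        = Real.sqrt ∘ (fun v : Fin 6 → ℝ => (v 1 - v 0) ^ 2 + (v 2) ^ 2) := by funext v; rfl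
    rw [e]; exact (Real.hasDerivAt_sqrt hq2).comp_hasFDerivAt p ((hdsq 1 0).add (hsq 2))
  have hc3 : HasFDerivAt (fun v : Fin 6 → ℝ => tetLengths v 3)
      ((1 / (2 * s3)) • ((p 3 • P 3 + p 3 • P 3) + (p 4 • P 4 + p 4 • P 4)
          + (p 5 • P 5 + p 5 • P 5))) p := by
    have e : (fun v : Fin 6 → ℝ => tetLengths v 3)
        = Real.sqrt ∘ (fun v : Fin 6 → ℝ => (v 3) ^ 2 + (v 4) ^ 2 + (v 5) ^ 2) := by
      funext v; rfl
    rw [e]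
    exact (Real.hasDerivAt_sqrt hq3).comp_hasFDerivAt p (((hsq 3).add (hsq 4)).add (hsq 5))
  have hc4 : HasFDerivAt (fun v : Fin 6 → ℝ => tetLengths v 4)
      ((1 / (2 * s4)) • (((p 3 - p 0) • (P 3 - P 0) + (p 3 - p 0) • (P 3 - P 0))
          + (p 4 • P 4 + p 4 • P 4) + (p 5 • P 5 + p 5 • P 5))) p := by
    have e : (fun v : Fin 6 → ℝ => tetLengths v 4)
        = Real.sqrt ∘ (fun v : Fin 6 → ℝ => (v 3 - v 0) ^ 2 + (v 4) ^ 2 + (v 5) ^ 2) := by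
      funext v; rfl
    rw [e]
    exact (Real.hasDerivAt_sqrt hq4).comp_hasFDerivAt p (((hdsq 3 0).add (hsq 4)).add (hsq 5))
  have hc5 : HasFDerivAt (fun v : Fin 6 → ℝ => tetLengths v 5)
      ((1 / (2 * s5)) • (((p 3 - p 1) • (P 3 - P 1) + (p 3 - p 1) • (P 3 - P 1))
          + ((p 4 - p 2) • (P 4 - P 2) + (p 4 - p 2) • (P 4 - P 2))
          + (p 5 • P 5 + p 5 • P 5))) p := by
    have e : (fun v : Fin 6 → ℝ => tetLengths v 5)
        = Real.sqrt ∘ (fun v : Fin 6 → ℝ => (v 3 - v 1) ^ 2 + (v 4 - v 2) ^ 2 + (v 5) ^ 2) := by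
      funext v; rfl
    rw [e]
    exact (Real.hasDerivAt_sqrt hq5).comp_hasFDerivAt p (((hdsq 3 1).add (hdsq 4 2)).add (hsq 5))
  set L : Fin 6 → ((Fin 6 → ℝ) →L[ℝ] ℝ) :=
    ![(1 / (2 * s0)) • (p 0 • P 0 + p 0 • P 0),
      (1 / (2 * s1)) • ((p 1 • P 1 + p 1 • P 1) + (p 2 • P 2 + p 2 • P 2)),
      (1 / (2 * s2)) • (((p 1 - p 0) • (P 1 - P 0) + (p 1 - p 0) • (P 1 - P 0))
          + (p 2 • P 2 + p 2 • P 2)),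
      (1 / (2 * s3)) • ((p 3 • P 3 + p 3 • P 3) + (p 4 • P 4 + p 4 • P 4)
          + (p 5 • P 5 + p 5 • P 5)),
      (1 / (2 * s4)) • (((p 3 - p 0) • (P 3 - P 0) + (p 3 - p 0) • (P 3 - P 0))
          + (p 4 • P 4 + p 4 • P 4) + (p 5 • P 5 + p 5 • P 5)),
      (1 / (2 * s5)) • (((p 3 - p 1) • (P 3 - P 1) + (p 3 - p 1) • (P 3 - P 1))
          + ((p 4 - p 2) • (P 4 - P 2) + (p 4 - p 2) • (P 4 - P 2))
          + (p 5 • P 5 + p 5 • P 5))] with hLdef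
  have hH : HasFDerivAt tetLengths (ContinuousLinearMap.pi L) p := by
    apply hasFDerivAt_pi.mpr
    intro i
    fin_cases i
    · exact hc0
    · exact hc1
    · exact hc2
    · exact hc3
    · exact hc4
    · exact hc5
  refine ⟨hH.differentiableAt, ?_⟩
  have hfd : fderiv ℝ tetLengths p = ContinuousLinearMap.pi L := hH.fderiv
  simp only [hfd]
  have htl : tetLengths p = ![s0, s1, s2, s3, s4, s5] := by
    funext i; fin_cases i <;> rfl
  rw [htl]
  clear_value s0 s1 s2 s3 s4 s5
  have hprod6 : ∏ i, (![s0, s1, s2, s3, s4, s5] : Fin 6 → ℝ) i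
      = s0 * s1 * s2 * s3 * s4 * s5 := by
    simp [Fin.prod_univ_succ, mul_assoc]
  have hdetM : (Matrix.of fun i j : Fin 6 =>
        (ContinuousLinearMap.pi L) (Pi.single j 1) i).det
      = (p 0 ^ 3 * p 2 ^ 2 * p 5) / (s0 * s1 * s2 * s3 * s4 * s5) := by
    rw [eq_div_iff (by positivity)]
    simp only [hLdef, hPdef]
    simp (config := { decide := true }) [Matrix.det_succ_row_zero, Fin.sum_univ_succ,
      Fin.succAbove, ContinuousLinearMap.pi_apply,
      ContinuousLinearMap.smul_apply, ContinuousLinearMap.add_apply,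
      ContinuousLinearMap.sub_apply, ContinuousLinearMap.proj_apply, Pi.single_apply,
      smul_eq_mul, -Fin.val_fin_lt]
    field_simp
    ring
  rw [hprod6, hdetM, abs_div]
  have habs : |s0 * s1 * s2 * s3 * s4 * s5| = s0 * s1 * s2 * s3 * s4 * s5 :=
    abs_of_pos (by
      rcases hn0.lt_or_eq with h | h; swap; · exact absurd h.symm hs0
      rcases hn1.lt_or_eq with h1 | h1; swap; · exact absurd h1.symm hs1
      rcases hn2.lt_or_eq with h2 | h2; swap; · exact absurd h2.symm hs2
      rcases hn3.lt_or_eq with h3 | h3; swap; · exact absurd h3.symm hs3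
      rcases hn4.lt_or_eq with h4 | h4; swap; · exact absurd h4.symm hs4
      rcases hn5.lt_or_eq with h5 | h5; swap; · exact absurd h5.symm hs5
      positivity)
  rw [habs, mul_div_assoc']
  rw [mul_comm (s0 * s1 * s2 * s3 * s4 * s5) _, mul_div_assoc,
    div_self (by positivity : s0 * s1 * s2 * s3 * s4 * s5 ≠ 0)]
  rw [abs_mul, abs_of_pos (show (0:ℝ) < p 0 ^ 3 * p 2 ^ 2 by positivity)]
  ring
end
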